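/- arXiv:2508.19408 — 6 statements merged into one kernel-verified Lean document; each statement's English description precedes it below -/
import Mathlib

section
/- Let a, d ∈ ℝ, b > 0, Ω_m > 0 and 0 < T ≤ π·b/Ω_m. Let g : ℝ → ℂ be continuous, and suppose the upchirped function g↑(t) = exp(i·a·t²/(2b))·g(t) is integrable on ℝ and its Fourier transform 𝓕g↑ vanishes at every ξ with |ξ| > Ω_m/(2π·b). Then for every t ∈ ℝ, g(t) = exp(−i·a·t²/(2b)) · Σ_{n∈ℤ} exp(i·a·(nT)²/(2b))·g(nT) · sinc((t − nT)/T), where sinc(x) = sin(π·x)/(π·x) for x ≠ 0 and sinc(0) = 1. -/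
open MeasureTheory Set Complex FourierTransform
open Real hiding sinc
open scoped InnerProductSpace

/-- Normalized sinc: sinc(x) = sin(πx)/(πx) for x ≠ 0, sinc(0) = 1. -/
noncomputable def sinc (x : ℝ) : ℝ :=
  if x = 0 then 1 else Real.sin (Real.pi * x) / (Real.pi * x)

theorem exp_sub_exp_sin (y : ℝ) :
    Complex.exp ((y:ℂ) * Complex.I) - Complex.exp (-(y:ℂ) * Complex.I)
      = 2 * Complex.I * Complex.sin y := by
  rw [Complex.sin]
  have h : (Complex.I)^2 = -1 := Complex.I_sq
  linear_combination (Complex.exp ((y:ℂ)*Complex.I) - Complex.exp (-(y:ℂ)*Complex.I)) * h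

theorem integral_exp_sinc (p x : ℝ) (hp : 0 < p) :
    ∫ ξ in Ioc (-(p/2)) (p/2), Complex.exp (2 * Real.pi * x * ξ * Complex.I)
      = ((p * sinc (p * x) : ℝ) : ℂ) := by
  rw [← intervalIntegral.integral_of_le (by linarith)]
  by_cases hx : x = 0
  · simp [hx, sinc]
  · have hπ : (Real.pi : ℝ) ≠ 0 := Real.pi_ne_zero
    have hc : (2 * (Real.pi:ℂ) * x * Complex.I) ≠ 0 :=
      mul_ne_zero (mul_ne_zero (mul_ne_zero two_ne_zero (by exact_mod_cast hπ))
        (by exact_mod_cast hx)) Complex.I_ne_zero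
    have heq : ∀ ξ : ℝ, Complex.exp (2 * Real.pi * x * ξ * Complex.I)
        = Complex.exp ((2 * (Real.pi:ℂ) * x * Complex.I) * ξ) := by
      intro ξ; ring_nf
    rw [intervalIntegral.integral_congr (fun ξ _ => heq ξ)]
    rw [integral_exp_mul_complex hc]
    have hsin : sinc (p * x) = Real.sin (Real.pi * (p * x)) / (Real.pi * (p * x)) := by
      simp [sinc, mul_ne_zero hp.ne' hx]
    rw [hsin]
    rw [show (2 * (Real.pi:ℂ) * x * Complex.I * ((p:ℝ)/2 : ℝ))
        = ((Real.pi * (p*x) : ℝ) : ℂ) * Complex.I by push_cast; ring]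
    rw [show (2 * (Real.pi:ℂ) * x * Complex.I * ((-(p/2) : ℝ) : ℂ))
        = -((Real.pi * (p*x) : ℝ) : ℂ) * Complex.I by push_cast; ring]
    rw [exp_sub_exp_sin]
    push_cast [Complex.ofReal_sin]
    have hπpx : ((Real.pi:ℂ) * ((p:ℂ) * x)) ≠ 0 := by
      exact mul_ne_zero (by exact_mod_cast hπ)
        (mul_ne_zero (by exact_mod_cast hp.ne') (by exact_mod_cast hx))
    have hpC : (p:ℂ) ≠ 0 := by exact_mod_cast hp.ne'
    field_simp

theorem integral_haar_liftIoc {p : ℝ} [hp : Fact (0 < p)] (a : ℝ) (h : ℝ → ℂ) :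
    ∫ x, AddCircle.liftIoc p a h x ∂AddCircle.haarAddCircle
      = (1/p : ℂ) * ∫ ξ in Ioc a (a + p), h ξ := by
  have h1 : ∫ ξ in Ioc a (a + p), h ξ = ∫ ξ in Ioc a (a + p), AddCircle.liftIoc p a h ξ := by
    refine setIntegral_congr_fun measurableSet_Ioc fun x hx => ?_
    rw [AddCircle.liftIoc_coe_apply hx]
  rw [h1, AddCircle.integral_preimage p a, AddCircle.volume_eq_smul_haarAddCircle,
    integral_smul_measure, ENNReal.toReal_ofReal hp.out.le, real_smul, ← mul_assoc]
  norm_num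
  rw [inv_mul_cancel₀ (by exact_mod_cast hp.out.ne' : (p:ℂ) ≠ 0), one_mul]

theorem measurable_liftIoc {p : ℝ} [hp : Fact (0 < p)] (a : ℝ) {f : ℝ → ℂ}
    (hf : Measurable f) : Measurable (AddCircle.liftIoc p a f) :=
  (hf.comp measurable_subtype_coe).comp (AddCircle.measurableEquivIoc p a).measurable

theorem shannon_core (p : ℝ) (hp : 0 < p) (f : ℝ → ℂ) (hf : Continuous f)
    (hint : Integrable f)
    (hband : ∀ ξ : ℝ, p / 2 < |ξ| → 𝓕 f ξ = 0) (t : ℝ) :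
    HasSum (fun n : ℤ => f ((n : ℝ) / p) * ((sinc (p * t - (n : ℝ)) : ℝ) : ℂ)) (f t) := by
  haveI : Fact (0 < p) := ⟨hp⟩
  have hpC : (p : ℂ) ≠ 0 := by exact_mod_cast hp.ne'
  set a : ℝ := -(p/2) with ha
  have hap : a + p = p/2 := by rw [ha]; ring
  set F : ℝ → ℂ := 𝓕 f with hF
  have hFcont : Continuous F :=
    VectorFourier.fourierIntegral_continuous Real.continuous_fourierChar (by continuity) hint
  have hFout : ∀ ξ : ℝ, ξ ∉ Icc (-(p/2)) (p/2) → F ξ = 0 := by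
    intro ξ hξ
    apply hband
    simp only [mem_Icc, not_and_or, not_le] at hξ
    rcases hξ with h | h
    · rw [abs_of_neg (by linarith)]; linarith
    · rw [abs_of_pos (by linarith)]; linarith
  have hFcs : HasCompactSupport F := HasCompactSupport.intro isCompact_Icc hFout
  have hFint : Integrable F := hFcont.integrable_of_hasCompactSupport hFcs
  obtain ⟨C, hC⟩ := hFcs.exists_bound_of_continuous hFcont
  -- inversion restricted to the interval
  have hinv : ∀ s : ℝ, ∫ ξ in Ioc a (a + p),
      Complex.exp (2 * Real.pi * s * ξ * Complex.I) * F ξ = f s := by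
    intro s
    rw [hap, ha]
    have h1 : 𝓕⁻ F s = f s := hint.fourierInv_fourier_eq hFint hf.continuousAt
    rw [fourierInv_eq'] at h1
    simp only [RCLike.inner_apply, conj_trivial] at h1
    calc ∫ ξ in Ioc (-(p/2)) (p/2), Complex.exp (2 * Real.pi * s * ξ * Complex.I) * F ξ
        = ∫ ξ in Icc (-(p/2)) (p/2), Complex.exp (2 * Real.pi * s * ξ * Complex.I) * F ξ :=
          (integral_Icc_eq_integral_Ioc).symm
      _ = ∫ ξ : ℝ, Complex.exp (2 * Real.pi * s * ξ * Complex.I) * F ξ :=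
          setIntegral_eq_integral_of_forall_compl_eq_zero
            (fun ξ hξ => by rw [hFout ξ hξ, mul_zero])
      _ = f s := by
          rw [← h1]
          refine integral_congr_ae (Filter.Eventually.of_forall fun ξ => ?_)
          show Complex.exp (2 * Real.pi * s * ξ * Complex.I) * F ξ
            = Complex.exp (((2 * Real.pi * (s * ξ) : ℝ) : ℂ) * Complex.I) • F ξ
          rw [smul_eq_mul]
          congr 2
          push_cast
          ring
  -- circle-lifted functions
  set G : AddCircle p → ℂ := AddCircle.liftIoc p a F with hG
  set uu : ℝ → ℂ := fun ξ => Complex.exp (((-(2 * Real.pi * t * ξ) : ℝ) : ℂ) * Complex.I)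
    with huu
  set u : AddCircle p → ℂ := AddCircle.liftIoc p a uu with hu
  have hGm : MemLp G 2 AddCircle.haarAddCircle := by
    refine MemLp.of_bound ((measurable_liftIoc a hFcont.measurable).aestronglyMeasurable) C
      (Filter.Eventually.of_forall fun x => ?_)
    exact hC _
  have hum : MemLp u 2 AddCircle.haarAddCircle := by
    refine MemLp.of_bound ((measurable_liftIoc a (by fun_prop)).aestronglyMeasurable) 1
      (Filter.Eventually.of_forall fun x => ?_)
    show ‖Complex.exp _‖ ≤ 1
    rw [Complex.norm_exp_ofReal_mul_I]
  -- Lp elements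
  set Gl : Lp ℂ 2 AddCircle.haarAddCircle := hGm.toLp G with hGl
  set uL : Lp ℂ 2 AddCircle.haarAddCircle := hum.toLp u with huL
  have hcoeffL : ∀ n : ℤ, fourierCoeff (Gl : AddCircle p → ℂ) n = fourierCoeff G n := by
    intro n
    refine integral_congr_ae ?_
    filter_upwards [hGm.coeFn_toLp] with x hx
    rw [hx]
  have hsum := hasSum_fourier_series_L2 Gl
  simp_rw [hcoeffL] at hsum
  have hsum2 : HasSum (fun n : ℤ => ⟪uL, fourierCoeff G n • fourierLp 2 n⟫_ℂ) ⟪uL, Gl⟫_ℂ :=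
    (innerSL ℂ uL).hasSum hsum
  simp_rw [inner_smul_right] at hsum2
  -- compute ⟪uL, Gl⟫
  have hinner_uG : ⟪uL, Gl⟫_ℂ = (1/p : ℂ) * f t := by
    rw [MeasureTheory.L2.inner_def]
    have hae : ∀ᵐ x ∂AddCircle.haarAddCircle, ⟪uL x, Gl x⟫_ℂ
        = AddCircle.liftIoc p a
            (fun ξ => Complex.exp (2 * Real.pi * t * ξ * Complex.I) * F ξ) x := by
      filter_upwards [hum.coeFn_toLp, hGm.coeFn_toLp] with x h1 h2
      rw [h1, h2, RCLike.inner_apply, mul_comm _ ((starRingEnd ℂ) (u x))]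
      show (starRingEnd ℂ) (uu _) * F _
        = Complex.exp (2 * Real.pi * t * _ * Complex.I) * F _
      congr 1
      rw [huu, ← Complex.exp_conj, map_mul, Complex.conj_ofReal, Complex.conj_I]
      congr 1
      push_cast
      ring
    rw [integral_congr_ae hae, integral_haar_liftIoc, hinv t]
  -- compute the Fourier coefficients of G
  have hcoeff : ∀ n : ℤ, fourierCoeff G n = (1/p : ℂ) * f (-(n:ℝ)/p) := by
    intro n
    have h5 : ∫ x in Ioc a (a + p),
        (fourier (-n) (↑x : AddCircle (a + p - a)) : ℂ) • F x = f (-(n:ℝ)/p) := by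
      rw [← hinv (-(n:ℝ)/p)]
      refine setIntegral_congr_fun measurableSet_Ioc fun x hx => ?_
      rw [fourier_coe_apply, smul_eq_mul]
      congr 2
      rw [show a + p - a = p by ring]
      push_cast
      field_simp
    rw [hG, fourierCoeff_liftIoc_eq, fourierCoeffOn_eq_integral,
      intervalIntegral.integral_of_le (by linarith : a ≤ a + p), h5,
      add_sub_cancel_left]
    rw [real_smul]
    push_cast
    ring
  -- compute ⟪uL, fourierLp 2 n⟫
  have hinner_e : ∀ n : ℤ, ⟪uL, (fourierLp 2 n : Lp ℂ 2 AddCircle.haarAddCircle)⟫_ℂ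
      = ((sinc (p * t + (n:ℝ)) : ℝ) : ℂ) := by
    intro n
    rw [MeasureTheory.L2.inner_def]
    have hae : ∀ᵐ x ∂AddCircle.haarAddCircle,
        ⟪uL x, (fourierLp 2 n : Lp ℂ 2 AddCircle.haarAddCircle) x⟫_ℂ
        = AddCircle.liftIoc p a
            (fun ξ => (starRingEnd ℂ) (uu ξ) * fourier n (↑ξ : AddCircle p)) x := by
      filter_upwards [hum.coeFn_toLp, coeFn_fourierLp 2 n] with x h1 h2
      rw [h1, h2, RCLike.inner_apply, mul_comm _ ((starRingEnd ℂ) (u x))]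
      show (starRingEnd ℂ) (uu _) * fourier n x = _ * fourier n _
      congr 2
      exact ((AddCircle.equivIoc p a).symm_apply_apply x).symm
    rw [integral_congr_ae hae, integral_haar_liftIoc]
    have h6 : ∫ ξ in Ioc a (a + p), (starRingEnd ℂ) (uu ξ) * fourier n (↑ξ : AddCircle p)
        = ((p * sinc (p * (t + n/p)) : ℝ) : ℂ) := by
      rw [← integral_exp_sinc p (t + n/p) hp, hap, ha]
      refine setIntegral_congr_fun measurableSet_Ioc fun ξ hξ => ?_
      rw [huu, fourier_coe_apply, ← Complex.exp_conj, map_mul, Complex.conj_ofReal,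
        Complex.conj_I, ← Complex.exp_add]
      congr 1
      push_cast
      field_simp
    rw [h6]
    have harg : p * (t + n/p) = p * t + n := by field_simp
    rw [harg]
    push_cast
    field_simp
  -- assemble
  rw [hinner_uG] at hsum2
  simp_rw [hcoeff, hinner_e] at hsum2
  have hsum3 := hsum2.mul_left (p : ℂ)
  rw [show (p:ℂ) * ((1/p) * f t) = f t by field_simp] at hsum3
  have hfun : (fun n : ℤ => (p:ℂ) * ((1/p : ℂ) * f (-(n:ℝ)/p) * ((sinc (p*t + (n:ℝ)) : ℝ) : ℂ)))
      = fun n : ℤ => f (-(n:ℝ)/p) * ((sinc (p*t + (n:ℝ)) : ℝ) : ℂ) := by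
    funext n
    field_simp
  rw [hfun] at hsum3
  have hfinal := ((Equiv.neg ℤ).hasSum_iff).2 hsum3
  have hcomp : ((fun n : ℤ => f (-(n:ℝ)/p) * ((sinc (p*t + (n:ℝ)) : ℝ) : ℂ)) ∘ (Equiv.neg ℤ))
      = fun n : ℤ => f ((n:ℝ)/p) * ((sinc (p*t - (n:ℝ)) : ℝ) : ℂ) := by
    funext n
    simp only [Function.comp_apply, Equiv.neg_apply]
    push_cast
    rw [neg_neg, ← sub_eq_add_neg]
  rwa [hcomp] at hfinal

/-- Sampling theorem (Theorem 1) for LCT-bandlimited signals: chirp-modulated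
sinc interpolation recovers g from its samples at rate T ≤ πb/Ωm. -/
theorem stmt3 (a d b Ωm T : ℝ) (hb : 0 < b) (hΩ : 0 < Ωm) (hT : 0 < T)
    (hTle : T ≤ Real.pi * b / Ωm)
    (g : ℝ → ℂ) (hg : Continuous g)
    (gup : ℝ → ℂ)
    (hgup : ∀ t : ℝ, gup t = Complex.exp (Complex.I * a * t ^ 2 / (2 * b)) * g t)
    (hint : MeasureTheory.Integrable gup)
    (hband : ∀ ξ : ℝ, Ωm / (2 * Real.pi * b) < |ξ| → FourierTransform.fourier gup ξ = 0) :
    ∀ t : ℝ, g t = Complex.exp (-Complex.I * a * t ^ 2 / (2 * b)) *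
      ∑' n : ℤ, Complex.exp (Complex.I * a * ((n : ℝ) * T) ^ 2 / (2 * b)) *
        g ((n : ℝ) * T) * (sinc ((t - (n : ℝ) * T) / T) : ℝ) := by
  intro t
  set p : ℝ := 1/T with hpdef
  have hp : 0 < p := by positivity
  have hgupc : Continuous gup := by
    have h : gup = fun s : ℝ => Complex.exp (Complex.I * a * s ^ 2 / (2 * b)) * g s := funext hgup
    rw [h]
    exact (Complex.continuous_exp.comp (by fun_prop)).mul hg
  have hband' : ∀ ξ : ℝ, p / 2 < |ξ| → 𝓕 gup ξ = 0 := by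
    intro ξ hξ
    apply hband
    refine lt_of_le_of_lt ?_ hξ
    have key : T * Ωm ≤ Real.pi * b := (le_div_iff₀ hΩ).mp hTle
    rw [div_le_div_iff₀ (by positivity) (by norm_num)]
    have hTpos := hT
    have h1 : Ωm * 2 * T ≤ p * (2 * Real.pi * b) * T := by
      have hpT : p * T = 1 := by rw [hpdef]; field_simp
      calc Ωm * 2 * T = 2 * (T * Ωm) := by ring
        _ ≤ 2 * (Real.pi * b) := by linarith
        _ = p * (2 * Real.pi * b) * T := by rw [show p * (2 * Real.pi * b) * T
              = (p * T) * (2 * Real.pi * b) by ring, hpT]; ring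
    exact le_of_mul_le_mul_right h1 hT
  have hs := shannon_core p hp gup hgupc hint hband' t
  have hterm : (fun n : ℤ => gup ((n:ℝ)/p) * ((sinc (p * t - (n:ℝ)) : ℝ) : ℂ))
      = fun n : ℤ => Complex.exp (Complex.I * a * ((n : ℝ) * T) ^ 2 / (2 * b)) *
        g ((n : ℝ) * T) * ((sinc ((t - (n:ℝ) * T) / T) : ℝ) : ℂ) := by
    funext n
    have h1 : (n:ℝ)/p = n * T := by rw [hpdef]; field_simp
    have h2 : p * t - n = (t - n*T)/T := by rw [hpdef]; field_simp
    rw [h1, h2, hgup]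
    push_cast
    ring
  rw [hterm] at hs
  rw [hs.tsum_eq, hgup t, ← mul_assoc, ← Complex.exp_add,
    show -Complex.I * a * t^2/(2*b) + Complex.I * a * t^2/(2*b) = 0 by ring,
    Complex.exp_zero, one_mul]
end

section
/- Let a, d ∈ ℝ and b > 0, and let g : ℝ → ℂ be continuous and integrable. Define L_Λg(ω) = (1/√(i·2πb)) · ∫_ℝ g(t)·exp(i·(a·t² − 2·t·ω + d·ω²)/(2b)) dt, and assume L_Λg is integrable on ℝ. Then for every t ∈ ℝ, g(t) = (1/√(−i·2πb)) · ∫_ℝ L_Λg(ω)·exp(−i·(a·t² − 2·t·ω + d·ω²)/(2b)) dω; that is, the inverse LCT (which is itself an LCT, with parameter matrix Λ⁻¹) recovers g from L_Λg. -/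
open MeasureTheory

set_option maxHeartbeats 2000000 in
/-- LCT inversion formula: for continuous integrable g with integrable LCT,
the inverse LCT recovers g pointwise. Here √(i·2πb) = √(2πb)·e^{iπ/4} and
√(−i·2πb) = √(2πb)·e^{−iπ/4} for b > 0. -/
theorem stmt5 (a d b : ℝ) (hb : 0 < b) (g : ℝ → ℂ)
    (hgc : Continuous g) (hgi : Integrable g)
    (Lg : ℝ → ℂ)
    (hLg : ∀ ω : ℝ, Lg ω =
      (1 / ((Real.sqrt (2 * Real.pi * b) : ℂ) * Complex.exp (Complex.I * Real.pi / 4))) *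
        ∫ t : ℝ, g t * Complex.exp (Complex.I * (a * t ^ 2 - 2 * t * ω + d * ω ^ 2) / (2 * b)))
    (hLgi : Integrable Lg) :
    ∀ t : ℝ, g t =
      (1 / ((Real.sqrt (2 * Real.pi * b) : ℂ) * Complex.exp (-Complex.I * Real.pi / 4))) *
        ∫ ω : ℝ, Lg ω * Complex.exp (-Complex.I * (a * t ^ 2 - 2 * t * ω + d * ω ^ 2) / (2 * b)) := by
  have hπ : (0:ℝ) < Real.pi := Real.pi_pos
  have h2πb : (0:ℝ) < 2 * Real.pi * b := by positivity
  set C : ℂ := (Real.sqrt (2 * Real.pi * b) : ℂ) * Complex.exp (Complex.I * Real.pi / 4) with hC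
  have hCne : C ≠ 0 := by
    apply mul_ne_zero
    · exact_mod_cast (Real.sqrt_pos.2 h2πb).ne'
    · exact Complex.exp_ne_zero _
  set h : ℝ → ℂ := fun t => g t * Complex.exp (Complex.I * a * t ^ 2 / (2 * b)) with hh
  have hnorm : ∀ t : ℝ, ‖Complex.exp (Complex.I * (a:ℂ) * (t:ℂ) ^ 2 / (2 * b))‖ = 1 := by
    intro t
    have : Complex.I * (a:ℂ) * (t:ℂ) ^ 2 / (2 * b) = ((a * t ^ 2 / (2 * b) : ℝ) : ℂ) * Complex.I := by
      push_cast; ring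
    rw [this, Complex.norm_exp_ofReal_mul_I]
  have hhi : Integrable h := by
    refine (integrable_norm_iff ?_).1 ?_
    · exact (hgc.mul (by continuity)).aestronglyMeasurable
    · simpa [hh, norm_mul, hnorm] using hgi.norm
  have hhc : Continuous h := hgc.mul (by continuity)
  -- Step B : Lg ω = C⁻¹ * exp(I d ω²/(2b)) * 𝓕 h (ω/(2πb))
  have hB : ∀ ω : ℝ, Lg ω = C⁻¹ * (Complex.exp (Complex.I * d * ω ^ 2 / (2 * b)) *
      (FourierTransform.fourier h (ω / (2 * Real.pi * b)))) := by
    intro ω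
    rw [hLg ω, Real.fourier_real_eq_integral_exp_smul]
    rw [one_div]
    congr 1
    rw [← integral_const_mul]
    congr 1
    ext t
    rw [smul_eq_mul]
    simp only [hh]
    have hbne : (b:ℂ) ≠ 0 := by exact_mod_cast hb.ne'
    have hπne : (Real.pi:ℂ) ≠ 0 := by exact_mod_cast hπ.ne'
    have hr : (-2 * Real.pi * t * (ω / (2 * Real.pi * b)) : ℝ) = -(t * ω) / b := by
      field_simp
    have hexp : Complex.I * ((a:ℂ) * t ^ 2 - 2 * t * ω + d * ω ^ 2) / (2 * b) =
        Complex.I * d * (ω:ℂ) ^ 2 / (2 * b) + (((-2 * Real.pi * t * (ω / (2 * Real.pi * b)) : ℝ) : ℂ) * Complex.I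
          + Complex.I * (a:ℂ) * (t:ℂ) ^ 2 / (2 * b)) := by
      rw [hr]
      have hbne : (b:ℂ) ≠ 0 := by exact_mod_cast hb.ne'
      push_cast
      field_simp
      ring
    rw [hexp, Complex.exp_add, Complex.exp_add]
    ring
  -- Step C : Integrable (𝓕 h)
  have hnormd : ∀ ω : ℝ, ‖Complex.exp (-(Complex.I * (d:ℂ) * (ω:ℂ) ^ 2 / (2 * b)))‖ = 1 := by
    intro ω
    have : -(Complex.I * (d:ℂ) * (ω:ℂ) ^ 2 / (2 * b)) = ((-(d * ω ^ 2 / (2 * b)) : ℝ) : ℂ) * Complex.I := by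
      push_cast; ring
    rw [this, Complex.norm_exp_ofReal_mul_I]
  have hFeq : (fun ω : ℝ => FourierTransform.fourier h (ω / (2 * Real.pi * b))) =
      fun ω : ℝ => (C * Complex.exp (-(Complex.I * (d:ℂ) * (ω:ℂ) ^ 2 / (2 * b)))) * Lg ω := by
    funext ω
    rw [hB ω]
    have hx : Complex.exp (-(Complex.I * (d:ℂ) * (ω:ℂ) ^ 2 / (2 * b))) *
        Complex.exp (Complex.I * (d:ℂ) * (ω:ℂ) ^ 2 / (2 * b)) = 1 := by
      rw [← Complex.exp_add, show -(Complex.I * (d:ℂ) * (ω:ℂ) ^ 2 / (2 * b)) +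
        Complex.I * (d:ℂ) * (ω:ℂ) ^ 2 / (2 * b) = 0 by ring, Complex.exp_zero]
    calc FourierTransform.fourier h (ω / (2 * Real.pi * b))
        = (C * C⁻¹) * ((Complex.exp (-(Complex.I * (d:ℂ) * (ω:ℂ) ^ 2 / (2 * b))) *
            Complex.exp (Complex.I * (d:ℂ) * (ω:ℂ) ^ 2 / (2 * b))) *
            FourierTransform.fourier h (ω / (2 * Real.pi * b))) := by
          rw [mul_inv_cancel₀ hCne, hx]; ring
      _ = C * Complex.exp (-(Complex.I * (d:ℂ) * (ω:ℂ) ^ 2 / (2 * b))) *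
            (C⁻¹ * (Complex.exp (Complex.I * (d:ℂ) * (ω:ℂ) ^ 2 / (2 * b)) *
            FourierTransform.fourier h (ω / (2 * Real.pi * b)))) := by ring
  have hFi : Integrable (fun ω : ℝ => FourierTransform.fourier h (ω / (2 * Real.pi * b))) := by
    rw [hFeq]
    refine hLgi.bdd_mul (c := ‖C‖) ?_ (Filter.Eventually.of_forall fun ω => ?_)
    · exact (continuous_const.mul (by continuity)).aestronglyMeasurable
    · rw [norm_mul, hnormd, mul_one]
  have hFhi : Integrable (FourierTransform.fourier h) :=
    (integrable_comp_div_iff (FourierTransform.fourier h) h2πb.ne').1 hFi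
  -- Fourier inversion
  have hGint : ∀ t : ℝ, (∫ ξ : ℝ, Complex.exp (((-2 * Real.pi * ξ * (-t) : ℝ) : ℂ) * Complex.I) *
      FourierTransform.fourier h ξ) = h t := by
    intro t
    have hinv := hhi.fourierInv_fourier_eq hFhi (hhc.continuousAt (x := t))
    rw [Real.fourierInv_eq_fourier_neg,
      Real.fourier_real_eq_integral_exp_smul] at hinv
    simpa [smul_eq_mul] using hinv
  -- Step D
  intro t
  set X : ℂ := Complex.I * (a:ℂ) * (t:ℂ) ^ 2 / (2 * b) with hX
  have hptwise : ∀ ω : ℝ, Lg ω * Complex.exp (-Complex.I * ((a:ℂ) * (t:ℂ) ^ 2 - 2 * t * ω + d * ω ^ 2) / (2 * b)) =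
      (C⁻¹ * Complex.exp (-X)) *
      (Complex.exp (((-2 * Real.pi * (ω / (2 * Real.pi * b)) * (-t) : ℝ) : ℂ) * Complex.I) *
        FourierTransform.fourier h (ω / (2 * Real.pi * b))) := by
    intro ω
    rw [hB ω]
    have hr2 : (-2 * Real.pi * (ω / (2 * Real.pi * b)) * (-t) : ℝ) = t * ω / b := by
      field_simp
    have hbne : (b:ℂ) ≠ 0 := by exact_mod_cast hb.ne'
    have hexp2 : Complex.exp (Complex.I * (d:ℂ) * (ω:ℂ) ^ 2 / (2 * b)) *
        Complex.exp (-Complex.I * ((a:ℂ) * (t:ℂ) ^ 2 - 2 * t * ω + d * ω ^ 2) / (2 * b)) =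
        Complex.exp (-X) * Complex.exp (((-2 * Real.pi * (ω / (2 * Real.pi * b)) * (-t) : ℝ) : ℂ) * Complex.I) := by
      rw [hr2, ← Complex.exp_add, ← Complex.exp_add, hX]
      congr 1
      push_cast
      field_simp
      ring
    calc C⁻¹ * (Complex.exp (Complex.I * (d:ℂ) * (ω:ℂ) ^ 2 / (2 * b)) *
          FourierTransform.fourier h (ω / (2 * Real.pi * b))) *
          Complex.exp (-Complex.I * ((a:ℂ) * (t:ℂ) ^ 2 - 2 * t * ω + d * ω ^ 2) / (2 * b))
        = C⁻¹ * ((Complex.exp (Complex.I * (d:ℂ) * (ω:ℂ) ^ 2 / (2 * b)) *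
            Complex.exp (-Complex.I * ((a:ℂ) * (t:ℂ) ^ 2 - 2 * t * ω + d * ω ^ 2) / (2 * b))) *
            FourierTransform.fourier h (ω / (2 * Real.pi * b))) := by ring
      _ = _ := by rw [hexp2]; ring
  have hsub : (∫ ω : ℝ, Complex.exp (((-2 * Real.pi * (ω / (2 * Real.pi * b)) * (-t) : ℝ) : ℂ) * Complex.I) *
      FourierTransform.fourier h (ω / (2 * Real.pi * b))) = ((2 * Real.pi * b : ℝ) : ℂ) * h t := by
    have h1 := MeasureTheory.Measure.integral_comp_div (fun ξ : ℝ =>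
      Complex.exp (((-2 * Real.pi * ξ * (-t) : ℝ) : ℂ) * Complex.I) * FourierTransform.fourier h ξ) (2 * Real.pi * b)
    rw [h1, hGint t, abs_of_pos h2πb, Complex.real_smul]
  have key : (∫ ω : ℝ, Lg ω * Complex.exp (-Complex.I * ((a:ℂ) * (t:ℂ) ^ 2 - 2 * t * ω + d * ω ^ 2) / (2 * b))) =
      (C⁻¹ * Complex.exp (-X)) * (((2 * Real.pi * b : ℝ) : ℂ) * h t) := by
    simp only [hptwise]
    rw [integral_const_mul, hsub]
  rw [key]
  set C' : ℂ := (Real.sqrt (2 * Real.pi * b) : ℂ) * Complex.exp (-Complex.I * Real.pi / 4) with hC'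
  have hC'ne : C' ≠ 0 := by
    apply mul_ne_zero
    · exact_mod_cast (Real.sqrt_pos.2 h2πb).ne'
    · exact Complex.exp_ne_zero _
  have hCC : C' * C = ((2 * Real.pi * b : ℝ) : ℂ) := by
    rw [hC', hC]
    rw [show (Real.sqrt (2 * Real.pi * b) : ℂ) * Complex.exp (-Complex.I * Real.pi / 4) *
      ((Real.sqrt (2 * Real.pi * b) : ℂ) * Complex.exp (Complex.I * Real.pi / 4)) =
      ((Real.sqrt (2 * Real.pi * b) : ℂ) * (Real.sqrt (2 * Real.pi * b) : ℂ)) *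
      (Complex.exp (-Complex.I * Real.pi / 4) * Complex.exp (Complex.I * Real.pi / 4)) by ring]
    rw [← Complex.exp_add, show -Complex.I * (Real.pi:ℂ) / 4 + Complex.I * Real.pi / 4 = 0 by ring,
      Complex.exp_zero, mul_one, ← Complex.ofReal_mul, Real.mul_self_sqrt h2πb.le]
  have hexpX : Complex.exp (-X) * Complex.exp X = 1 := by
    rw [← Complex.exp_add, neg_add_cancel, Complex.exp_zero]
  rw [← hCC, hh]
  simp only []
  rw [show (1:ℂ) / C' * (C⁻¹ * Complex.exp (-X) * (C' * C * (g t * Complex.exp (Complex.I * (a:ℂ) * (t:ℂ) ^ 2 / (2 * b))))) =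
    (C' / C') * (C * C⁻¹) * (Complex.exp (-X) * Complex.exp (Complex.I * (a:ℂ) * (t:ℂ) ^ 2 / (2 * b))) * g t by ring,
    ← hX, hexpX, div_self hC'ne, mul_inv_cancel₀ hCne]
  ring
end

section
/- Let a, d ∈ ℝ, b > 0, T > 0. Let f, g : ℤ → ℂ be absolutely summable sequences, and let m(n) = exp(i·a·(nT)²/(2b)) denote the discrete chirp. Define the LCT convolution h(n) = (1/√(i·2πb))·conj(m(n))·Σ_{k∈ℤ} m(k)·f(k)·m(n−k)·g(n−k). For any absolutely summable sequence s : ℤ → ℂ define its discrete-time LCT as Ŝ(ω) = (T/√(i·2πb))·Σ_{n∈ℤ} s(n)·exp(i·(a·(nT)² − 2·nT·ω + d·ω²)/(2b)). Then for every ω ∈ ℝ, Ĥ(ω) = (exp(−i·d·ω²/(2b))/T)·F̂(ω)·Ĝ(ω), where F̂, Ĝ, Ĥ are the discrete-time LCTs of f, g, h respectively. -/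
/-- Discrete-time LCT of a sequence s : ℤ → ℂ with parameters a, d, b (b > 0)
and sampling period T; here √(i·2πb) = √(2πb)·e^{iπ/4}. -/
noncomputable def dtlct (a d b T : ℝ) (s : ℤ → ℂ) (ω : ℝ) : ℂ :=
  ((T : ℂ) / ((Real.sqrt (2 * Real.pi * b) : ℂ) * Complex.exp (Complex.I * Real.pi / 4))) *
    ∑' n : ℤ, s n *
      Complex.exp (Complex.I *
        (a * ((n : ℝ) * T) ^ 2 - 2 * ((n : ℝ) * T) * ω + d * ω ^ 2) / (2 * b))

/-- LCT convolution–product theorem for the discrete-time LCT: the chirp-twisted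
convolution of two absolutely summable sequences maps to a chirp-weighted product
of their discrete-time LCTs. -/
theorem stmt6 (a d b T : ℝ) (hb : 0 < b) (hT : 0 < T)
    (f g : ℤ → ℂ) (hf : Summable fun n => ‖f n‖) (hg : Summable fun n => ‖g n‖)
    (m : ℤ → ℂ)
    (hm : ∀ n : ℤ, m n = Complex.exp (Complex.I * a * ((n : ℝ) * T) ^ 2 / (2 * b)))
    (hconv : ℤ → ℂ)
    (hh : ∀ n : ℤ, hconv n =
      (1 / ((Real.sqrt (2 * Real.pi * b) : ℂ) * Complex.exp (Complex.I * Real.pi / 4))) *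
        (starRingEnd ℂ) (m n) * ∑' k : ℤ, m k * f k * m (n - k) * g (n - k)) :
    ∀ ω : ℝ, dtlct a d b T hconv ω =
      (Complex.exp (-Complex.I * d * ω ^ 2 / (2 * b)) / (T : ℂ)) *
        dtlct a d b T f ω * dtlct a d b T g ω := by
  intro ω
  have hbC : (2 * b : ℂ) ≠ 0 := by
    exact_mod_cast mul_ne_zero two_ne_zero (ne_of_gt hb)
  set c : ℂ := (Real.sqrt (2 * Real.pi * b) : ℂ) * Complex.exp (Complex.I * Real.pi / 4) with hc
  have hcne : c ≠ 0 := by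
    apply mul_ne_zero
    · exact_mod_cast (Real.sqrt_pos.mpr (by positivity)).ne'
    · exact Complex.exp_ne_zero _
  set E : ℤ → ℂ := fun n => Complex.exp (Complex.I *
        (a * ((n : ℝ) * T) ^ 2 - 2 * ((n : ℝ) * T) * ω + d * ω ^ 2) / (2 * b)) with hE
  have hEnorm : ∀ n : ℤ, ‖E n‖ = 1 := by
    intro n
    rw [hE]
    simp only
    rw [show (Complex.I * (a * ((n : ℝ) * T) ^ 2 - 2 * ((n : ℝ) * T) * ω + d * ω ^ 2) / (2 * b))
        = Complex.I * ((a * ((n : ℝ) * T) ^ 2 - 2 * ((n : ℝ) * T) * ω + d * ω ^ 2) / (2 * b) : ℝ)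
      by push_cast; ring]
    rw [mul_comm Complex.I, Complex.norm_exp_ofReal_mul_I]
  set φ : ℤ → ℂ := fun k => f k * E k with hφ
  set ψ : ℤ → ℂ := fun k => g k * E k with hψ
  have hφs : Summable fun k => ‖φ k‖ := by
    refine hf.congr fun k => ?_
    simp [hφ, hEnorm k]
  have hψs : Summable fun k => ‖ψ k‖ := by
    refine hg.congr fun k => ?_
    simp [hψ, hEnorm k]
  have merge : ∀ (p q α β γ δ ε ζ η : ℂ), α + β + γ + δ = ε + ζ + η →
      Complex.exp α * (Complex.exp β * p * Complex.exp γ * q) * Complex.exp δ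
        = Complex.exp ε * (p * Complex.exp ζ * (q * Complex.exp η)) := by
    intro p q α β γ δ ε ζ η h
    have h2 := congrArg Complex.exp h
    simp only [Complex.exp_add] at h2
    linear_combination (p * q) * h2
  have key : ∀ n k : ℤ,
      (starRingEnd ℂ) (m n) * (m k * f k * m (n - k) * g (n - k)) * E n
        = Complex.exp (-Complex.I * d * ω ^ 2 / (2 * b)) * (φ k * ψ (n - k)) := by
    intro n k
    have hconjm : (starRingEnd ℂ) (m n)
        = Complex.exp (-(Complex.I * a * ((n : ℝ) * T) ^ 2 / (2 * b))) := by
      rw [hm n, ← Complex.exp_conj]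
      congr 1
      simp only [map_div₀, map_mul, map_pow, Complex.conj_I, Complex.conj_ofReal, map_ofNat]
      ring
    rw [hconjm, hm k, hm (n - k), hφ, hψ, hE]
    simp only
    rw [show ((n - k : ℤ) : ℝ) = (n : ℝ) - (k : ℝ) by push_cast; ring]
    exact merge _ _ _ _ _ _ _ _ _ (by field_simp; push_cast; ring)
  -- summability of the product over ℤ × ℤ and reindexing
  have hprodnorm : Summable fun z : ℤ × ℤ => ‖φ z.1 * ψ z.2‖ := hφs.mul_norm hψs
  let e : ℤ × ℤ ≃ ℤ × ℤ :=
    ⟨fun p => (p.2, p.1 - p.2), fun q => (q.1 + q.2, q.1), fun p => by simp, fun q => by simp⟩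
  have hcompnorm : Summable fun p : ℤ × ℤ => ‖φ p.2 * ψ (p.1 - p.2)‖ := by
    have := hprodnorm.comp_injective e.injective
    exact this.congr fun p => rfl
  have hcomps : Summable fun p : ℤ × ℤ => φ p.2 * ψ (p.1 - p.2) :=
    Summable.of_norm hcompnorm
  have hsum2 : ∑' p : ℤ × ℤ, φ p.2 * ψ (p.1 - p.2) = (∑' k, φ k) * (∑' k, ψ k) := by
    rw [← e.symm.tsum_eq (fun p : ℤ × ℤ => φ p.2 * ψ (p.1 - p.2))]
    have : ∀ q : ℤ × ℤ, φ (e.symm q).2 * ψ ((e.symm q).1 - (e.symm q).2) = φ q.1 * ψ q.2 := by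
      intro q; simp [e]
    rw [tsum_congr this]
    exact (tsum_mul_tsum_of_summable_norm hφs hψs).symm
  -- compute the LHS tsum
  have hterm : ∀ n : ℤ, hconv n * E n
      = (1 / c) * Complex.exp (-Complex.I * d * ω ^ 2 / (2 * b)) * ∑' k : ℤ, φ k * ψ (n - k) := by
    intro n
    have h1 : ∑' k : ℤ, ((starRingEnd ℂ) (m n) * (m k * f k * m (n - k) * g (n - k)) * E n)
        = (starRingEnd ℂ) (m n) * (∑' k : ℤ, m k * f k * m (n - k) * g (n - k)) * E n := by
      rw [tsum_mul_right, tsum_mul_left]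
    rw [hh n, show (1 / c * (starRingEnd ℂ) (m n) *
        ∑' k : ℤ, m k * f k * m (n - k) * g (n - k)) * E n
      = 1 / c * ((starRingEnd ℂ) (m n) *
        (∑' k : ℤ, m k * f k * m (n - k) * g (n - k)) * E n) from by ring, ← h1,
      tsum_congr (fun k => key n k), tsum_mul_left]
    ring
  have htsum : ∑' n : ℤ, hconv n * E n
      = (1 / c) * Complex.exp (-Complex.I * d * ω ^ 2 / (2 * b)) * ((∑' k, φ k) * (∑' k, ψ k)) := by
    rw [tsum_congr hterm, tsum_mul_left]
    congr 1
    rw [← hsum2, Summable.tsum_prod' hcomps hcomps.prod_factor]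
  -- assemble
  show (T / c) * (∑' n : ℤ, hconv n * E n) = _
  rw [htsum]
  show _ = (Complex.exp (-Complex.I * d * ω ^ 2 / (2 * b)) / T) *
      ((T / c) * ∑' k, φ k) * ((T / c) * ∑' k, ψ k)
  have hTne : (T : ℂ) ≠ 0 := by exact_mod_cast hT.ne'
  field_simp
end

section
/- Let h ∈ (0,1), let u : ℤ → ℝ satisfy |u(n)| ≤ 1 for all n ∈ ℤ, and let φ : ℝ → ℝ be continuously differentiable with compact support. Then for every x ∈ ℝ, |h · Σ_{n∈ℤ} (u(n) − u(n−1))·φ(x − n·h)| ≤ h · ∫_ℝ |φ′(y)| dy. -/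
open MeasureTheory intervalIntegral

private lemma adj_sum (g : ℝ → ℝ) (hg : Continuous g) (x h : ℝ) (b : ℤ) (k : ℕ) :
    ∑ n ∈ Finset.Icc b (b + (k : ℤ)),
      (∫ y in (x - ((n : ℝ) + 1) * h)..(x - (n : ℝ) * h), g y)
      = ∫ y in (x - ((b : ℝ) + (k : ℝ) + 1) * h)..(x - (b : ℝ) * h), g y := by
  induction k with
  | zero => simp
  | succ k ih =>
      have hins : Finset.Icc b (b + ((k : ℤ) + 1)) =
          insert (b + (k : ℤ) + 1) (Finset.Icc b (b + (k : ℤ))) := by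
        ext m; simp only [Finset.mem_Icc, Finset.mem_insert]; omega
      push_cast
      rw [hins, Finset.sum_insert (by simp), ih]
      push_cast
      have hadd := intervalIntegral.integral_add_adjacent_intervals
        (a := x - ((b:ℝ) + (k:ℝ) + 1 + 1) * h) (b := x - ((b:ℝ) + (k:ℝ) + 1) * h)
        (c := x - (b:ℝ) * h) (μ := volume) (f := g)
        (hg.intervalIntegrable _ _) (hg.intervalIntegrable _ _)
      rw [show x - ((b:ℝ) + ((k:ℝ) + 1) + 1) * h = x - ((b:ℝ) + (k:ℝ) + 1 + 1) * h
        from by ring]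
      exact hadd

/-- Classical Fourier-domain reconstruction error bound for first-order
Sigma-Delta quantization: the low-pass-filtered first difference of the
bounded state sequence is bounded by h·‖φ′‖_{L¹}. -/
theorem stmt11 (h : ℝ) (hh : h ∈ Set.Ioo (0 : ℝ) 1)
    (u : ℤ → ℝ) (hu : ∀ n : ℤ, |u n| ≤ 1)
    (φ : ℝ → ℝ) (hφ : ContDiff ℝ 1 φ) (hsupp : HasCompactSupport φ) :
    ∀ x : ℝ, |h * ∑' n : ℤ, (u n - u (n - 1)) * φ (x - (n : ℝ) * h)| ≤
      h * ∫ y : ℝ, |deriv φ y| := by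
  intro x
  obtain ⟨hh0, hh1⟩ := hh
  have hφc : Continuous φ := hφ.continuous
  have hφ'c : Continuous (deriv φ) := hφ.continuous_deriv le_rfl
  have hφd : Differentiable ℝ φ := hφ.differentiable one_ne_zero
  have hφ'abs : Continuous fun y => |deriv φ y| := hφ'c.abs
  have hint : Integrable (fun y => |deriv φ y|) :=
    (hφ'c.integrable_of_hasCompactSupport hsupp.deriv).abs
  obtain ⟨R, hR⟩ := hsupp.isCompact.isBounded.subset_closedBall 0
  have hzero : ∀ y : ℝ, R < |y| → φ y = 0 := by
    intro y hy
    by_contra hne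
    have hmem : y ∈ tsupport φ := subset_tsupport φ hne
    have := hR hmem
    rw [Metric.mem_closedBall, Real.dist_eq, sub_zero] at this
    linarith
  set M : ℕ := ⌈(|x| + |R|) / h⌉₊ + 2 with hMdef
  have hMb : (|x| + |R|) / h < (M : ℝ) := by
    have := Nat.le_ceil ((|x| + |R|) / h)
    have : ((⌈(|x| + |R|) / h⌉₊ : ℝ)) ≥ (|x| + |R|) / h := this
    have hcast : (M : ℝ) = (⌈(|x| + |R|) / h⌉₊ : ℝ) + 2 := by push_cast [hMdef]; ring
    linarith
  have hMR : |x| + R < (M : ℝ) * h := by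
    have h1 : |x| + R ≤ |x| + |R| := by have := le_abs_self R; linarith
    have h2 : (|x| + |R|) < (M : ℝ) * h := by
      rw [div_lt_iff₀ hh0] at hMb; linarith
    linarith
  have hzn : ∀ n : ℤ, (M : ℝ) ≤ |(n : ℝ)| → φ (x - (n : ℝ) * h) = 0 := by
    intro n hn
    apply hzero
    have h1 : (M : ℝ) * h ≤ |(n : ℝ)| * h := by
      apply mul_le_mul_of_nonneg_right hn hh0.le
    have h2 : |(n : ℝ) * h| = |(n : ℝ)| * h := by
      rw [abs_mul, abs_of_pos hh0]
    have h3 : |x - (n : ℝ) * h| ≥ |(n : ℝ) * h| - |x| := by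
      have := abs_sub_abs_le_abs_sub ((n : ℝ) * h) x
      rw [abs_sub_comm] at this
      linarith
    rw [h2] at h3
    linarith
  have habs : ∀ n : ℤ, (M : ℤ) ≤ |n| → φ (x - (n : ℝ) * h) = 0 := by
    intro n hn
    apply hzn
    have : ((|n| : ℤ) : ℝ) = |(n : ℝ)| := by push_cast; exact rfl
    rw [← this]; exact_mod_cast hn
  set s : Finset ℤ := Finset.Icc (-(M : ℤ)) (M : ℤ) with hs
  have htsum : (∑' n : ℤ, (u n - u (n - 1)) * φ (x - (n : ℝ) * h))
      = ∑ n ∈ s, (u n - u (n - 1)) * φ (x - (n : ℝ) * h) := by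
    apply tsum_eq_sum
    intro n hn
    have : φ (x - (n : ℝ) * h) = 0 := by
      apply habs
      simp only [hs, Finset.mem_Icc, not_and_or, not_le] at hn
      rcases hn with h' | h'
      · rw [abs_of_neg (by omega)]; omega
      · rw [abs_of_pos (by omega)]; omega
    rw [this, mul_zero]
  -- summation by parts
  have hshift : ∑ n ∈ s, u (n - 1) * φ (x - (n : ℝ) * h)
      = ∑ n ∈ s, u n * φ (x - ((n : ℝ) + 1) * h) := by
    have e1 : ∑ n ∈ s, u (n - 1) * φ (x - (n : ℝ) * h)
        = ∑ m ∈ Finset.Icc (-(M : ℤ) - 1) ((M : ℤ) - 1),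
            u m * φ (x - ((m : ℝ) + 1) * h) := by
      rw [hs]
      refine Finset.sum_nbij' (fun n => n - 1) (fun m => m + 1) ?_ ?_ ?_ ?_ ?_
      · intro a ha; simp only [Finset.mem_Icc] at *; omega
      · intro a ha; simp only [Finset.mem_Icc] at *; omega
      · intro a _; ring
      · intro a _; ring
      · intro a _
        congr 2
        push_cast; ring
    rw [e1]
    have sub1 : Finset.Icc (-(M : ℤ) - 1) ((M : ℤ) - 1) ⊆
        Finset.Icc (-(M : ℤ) - 1) (M : ℤ) := by
      apply Finset.Icc_subset_Icc_right; omega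
    have sub2 : s ⊆ Finset.Icc (-(M : ℤ) - 1) (M : ℤ) := by
      rw [hs]; apply Finset.Icc_subset_Icc_left; omega
    have z : ∀ m ∈ Finset.Icc (-(M : ℤ) - 1) (M : ℤ),
        m ∉ Finset.Icc (-(M : ℤ) - 1) ((M : ℤ) - 1) →
        u m * φ (x - ((m : ℝ) + 1) * h) = 0 := by
      intro m hm hnm
      have hmM : m = (M : ℤ) := by
        simp only [Finset.mem_Icc] at *; omega
      have : φ (x - ((m : ℝ) + 1) * h) = 0 := by
        have : ((m : ℝ) + 1) = ((m + 1 : ℤ) : ℝ) := by push_cast; ring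
        rw [this]
        apply habs
        rw [hmM]
        rw [abs_of_nonneg (by positivity)]
        omega
      rw [this, mul_zero]
    have z2 : ∀ m ∈ Finset.Icc (-(M : ℤ) - 1) (M : ℤ), m ∉ s →
        u m * φ (x - ((m : ℝ) + 1) * h) = 0 := by
      intro m hm hnm
      have hmM : m = -(M : ℤ) - 1 := by
        simp only [hs, Finset.mem_Icc] at *; omega
      have : φ (x - ((m : ℝ) + 1) * h) = 0 := by
        have : ((m : ℝ) + 1) = ((m + 1 : ℤ) : ℝ) := by push_cast; ring
        rw [this]
        apply habs
        rw [hmM]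
        have h4 : -(M : ℤ) - 1 + 1 = -(M : ℤ) := by ring
        rw [h4, abs_neg, abs_of_nonneg (by positivity)]
      rw [this, mul_zero]
    rw [Finset.sum_subset sub1 z, Finset.sum_subset sub2 z2]
  have hparts : ∑ n ∈ s, (u n - u (n - 1)) * φ (x - (n : ℝ) * h)
      = ∑ n ∈ s, u n * (φ (x - (n : ℝ) * h) - φ (x - ((n : ℝ) + 1) * h)) := by
    have : ∀ n ∈ s, (u n - u (n - 1)) * φ (x - (n : ℝ) * h)
        = u n * φ (x - (n : ℝ) * h) - u (n - 1) * φ (x - (n : ℝ) * h) := by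
      intro n _; ring
    rw [Finset.sum_congr rfl this, Finset.sum_sub_distrib, hshift,
      ← Finset.sum_sub_distrib]
    apply Finset.sum_congr rfl
    intro n _; ring
  -- bound each term by integral of |deriv φ|
  have hterm : ∀ n : ℤ, |φ (x - (n : ℝ) * h) - φ (x - ((n : ℝ) + 1) * h)|
      ≤ ∫ y in (x - ((n : ℝ) + 1) * h)..(x - (n : ℝ) * h), |deriv φ y| := by
    intro n
    have hab : x - ((n : ℝ) + 1) * h ≤ x - (n : ℝ) * h := by nlinarith
    have hftc : (∫ y in (x - ((n : ℝ) + 1) * h)..(x - (n : ℝ) * h), deriv φ y)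
        = φ (x - (n : ℝ) * h) - φ (x - ((n : ℝ) + 1) * h) := by
      apply intervalIntegral.integral_deriv_eq_sub
      · intro y _; exact hφd y
      · exact hφ'c.intervalIntegrable _ _
    rw [← hftc]
    exact intervalIntegral.abs_integral_le_integral_abs hab
  -- total bound
  rw [htsum, hparts, abs_mul, abs_of_pos hh0]
  apply mul_le_mul_of_nonneg_left _ hh0.le
  calc |∑ n ∈ s, u n * (φ (x - (n : ℝ) * h) - φ (x - ((n : ℝ) + 1) * h))|
      ≤ ∑ n ∈ s, |u n * (φ (x - (n : ℝ) * h) - φ (x - ((n : ℝ) + 1) * h))| :=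
        Finset.abs_sum_le_sum_abs _ _
    _ ≤ ∑ n ∈ s, |φ (x - (n : ℝ) * h) - φ (x - ((n : ℝ) + 1) * h)| := by
        apply Finset.sum_le_sum
        intro n _
        rw [abs_mul]
        exact mul_le_of_le_one_left (abs_nonneg _) (hu n)
    _ ≤ ∑ n ∈ s, ∫ y in (x - ((n : ℝ) + 1) * h)..(x - (n : ℝ) * h), |deriv φ y| :=
        Finset.sum_le_sum fun n _ => hterm n
    _ = ∫ y in (x - (((-(M : ℤ) : ℤ) : ℝ) + ((2 * M : ℕ) : ℕ) + 1) * h)..(x - ((-(M : ℤ) : ℤ) : ℝ) * h),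
          |deriv φ y| := by
        have := adj_sum (fun y => |deriv φ y|) hφ'abs x h (-(M : ℤ)) (2 * M)
        have hIcc : s = Finset.Icc (-(M : ℤ)) (-(M : ℤ) + (2 * M : ℕ)) := by
          rw [hs]; congr 1; push_cast; ring
        rw [hIcc]
        exact this
    _ ≤ ∫ y : ℝ, |deriv φ y| := by
        have hab : x - (((-(M : ℤ) : ℤ) : ℝ) + ((2 * M : ℕ) : ℕ) + 1) * h
            ≤ x - ((-(M : ℤ) : ℤ) : ℝ) * h := by
          push_cast
          nlinarith [Nat.cast_nonneg (α := ℝ) M]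
        rw [intervalIntegral.integral_of_le hab]
        exact setIntegral_le_integral hint
          (Filter.Eventually.of_forall fun y => abs_nonneg _)
end

section
/- Let N, K be positive integers, T > 0, τ = N·T, ω₀ = 2π/τ, a, d ∈ ℝ, b > 0. Let n₀, …, n_{K−1} ∈ {0, …, N−1} and c₀, …, c_{K−1} ∈ ℂ. Define the downchirped sparse residue sequence s(n) = exp(−i·a·(nT)²/(2b)) · Σ_{k : n_k = n} c_k for n ∈ {0, …, N−1}, and for m ∈ ℤ define its DLCT Ê(m) = T·√(ω₀·b) · Σ_{n=0}^{N−1} s(n) · (1/√(i·2πb)) · exp(i·(d·(m·ω₀·b)² − 2·(m·ω₀·b)·(nT) + a·(nT)²)/(2b)). Then the demodulated sequence f̂(m) = (√τ/(T·e^{−iπ/4})) · exp(−i·d·(m·ω₀·b)²/(2b)) · Ê(m) satisfies f̂(m) = Σ_{k=0}^{K−1} c_k · exp(−i·n_k·T·m·ω₀) for every m ∈ ℤ; i.e., f̂ is a sum of K complex exponentials whose frequencies encode the folding locations n_k. -/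
/-- The downchirped sparse folding residue maps under the DLCT, after explicit
chirp demodulation and normalization, to a sum of K complex exponentials whose
frequencies encode the folding locations n_k. Here √(i·2πb) = √(2πb)·e^{iπ/4}
and e^{−iπ/4} = √(−i). -/
theorem stmt13 (N K : ℕ) (hN : 0 < N) (hK : 0 < K) (T : ℝ) (hT : 0 < T)
    (a d b : ℝ) (hb : 0 < b)
    (τ ω0 : ℝ) (hτ : τ = (N : ℝ) * T) (hω0 : ω0 = 2 * Real.pi / τ)
    (nk : Fin K → ℕ) (hnk : ∀ k : Fin K, nk k < N)
    (c : Fin K → ℂ)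
    (s : ℕ → ℂ)
    (hs : ∀ n : ℕ, n < N →
      s n = Complex.exp (-Complex.I * a * ((n : ℝ) * T) ^ 2 / (2 * b)) *
        ∑ k ∈ Finset.univ.filter (fun k => nk k = n), c k)
    (E : ℤ → ℂ)
    (hE : ∀ m : ℤ, E m = (T : ℂ) * (Real.sqrt (ω0 * b) : ℂ) *
      ∑ n ∈ Finset.range N, s n *
        (1 / ((Real.sqrt (2 * Real.pi * b) : ℂ) * Complex.exp (Complex.I * Real.pi / 4))) *
        Complex.exp (Complex.I *
          (d * ((m : ℝ) * ω0 * b) ^ 2 - 2 * ((m : ℝ) * ω0 * b) * ((n : ℝ) * T) +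
            a * ((n : ℝ) * T) ^ 2) / (2 * b)))
    (fhat : ℤ → ℂ)
    (hfhat : ∀ m : ℤ, fhat m =
      ((Real.sqrt τ : ℂ) / ((T : ℂ) * Complex.exp (-Complex.I * Real.pi / 4))) *
        Complex.exp (-Complex.I * d * ((m : ℝ) * ω0 * b) ^ 2 / (2 * b)) * E m) :
    ∀ m : ℤ, fhat m =
      ∑ k : Fin K, c k * Complex.exp (-Complex.I * (nk k : ℝ) * T * (m : ℝ) * ω0) := by
  intro m
  have hτ0 : 0 < τ := by rw [hτ]; positivity
  have hτne : τ ≠ 0 := hτ0.ne'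
  have hbne : (b:ℂ) ≠ 0 := by exact_mod_cast hb.ne'
  have hTne : (T:ℂ) ≠ 0 := by exact_mod_cast hT.ne'
  have hRpos : 0 < Real.sqrt (2 * Real.pi * b) := Real.sqrt_pos.mpr (by positivity)
  have hRne : ((Real.sqrt (2 * Real.pi * b) : ℝ) : ℂ) ≠ 0 := by exact_mod_cast hRpos.ne'
  have hsq : (Real.sqrt τ : ℂ) * (Real.sqrt (ω0 * b) : ℂ) = (Real.sqrt (2 * Real.pi * b) : ℂ) := by
    have : Real.sqrt τ * Real.sqrt (ω0 * b) = Real.sqrt (2 * Real.pi * b) := by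
      rw [← Real.sqrt_mul hτ0.le]
      congr 1
      rw [hω0]; field_simp
    exact_mod_cast this
  rw [hfhat, hE, ← Finset.sum_fiberwise_of_maps_to
    (g := nk) (t := Finset.range N) (fun k _ => Finset.mem_range.mpr (hnk k)),
    Finset.mul_sum, Finset.mul_sum]
  refine Finset.sum_congr rfl (fun n hn => ?_)
  rw [hs n (Finset.mem_range.mp hn)]
  have hin : ∑ k ∈ Finset.univ.filter (fun k => nk k = n),
      c k * Complex.exp (-Complex.I * (nk k : ℝ) * T * (m : ℝ) * ω0)
      = (∑ k ∈ Finset.univ.filter (fun k => nk k = n), c k) *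
        Complex.exp (-Complex.I * (n : ℝ) * T * (m : ℝ) * ω0) := by
    rw [Finset.sum_mul]
    refine Finset.sum_congr rfl (fun k hk => ?_)
    rw [(Finset.mem_filter.mp hk).2]
  rw [hin]
  have hee : Complex.exp (-Complex.I * Real.pi / 4) * Complex.exp (Complex.I * Real.pi / 4) = 1 := by
    rw [← Complex.exp_add]
    rw [show (-Complex.I * Real.pi / 4 + Complex.I * Real.pi / 4 : ℂ) = 0 by ring]
    exact Complex.exp_zero
  have hexp : Complex.exp (-Complex.I * d * ((m : ℝ) * ω0 * b) ^ 2 / (2 * b)) *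
      (Complex.exp (-Complex.I * a * ((n : ℝ) * T) ^ 2 / (2 * b)) *
        Complex.exp (Complex.I *
          (d * ((m : ℝ) * ω0 * b) ^ 2 - 2 * ((m : ℝ) * ω0 * b) * ((n : ℝ) * T) +
            a * ((n : ℝ) * T) ^ 2) / (2 * b)))
      = Complex.exp (-Complex.I * (n : ℝ) * T * (m : ℝ) * ω0) := by
    rw [← Complex.exp_add, ← Complex.exp_add]
    congr 1
    field_simp
    ring
  set S := ∑ k ∈ Finset.univ.filter (fun k => nk k = n), c k with hS
  set A := ((Real.sqrt τ : ℝ) : ℂ)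
  set W := ((Real.sqrt (ω0 * b) : ℝ) : ℂ)
  set R := ((Real.sqrt (2 * Real.pi * b) : ℝ) : ℂ)
  set Em := Complex.exp (-Complex.I * Real.pi / 4) with hEm
  set Ep := Complex.exp (Complex.I * Real.pi / 4) with hEp
  set D := Complex.exp (-Complex.I * d * ((m : ℝ) * ω0 * b) ^ 2 / (2 * b)) with hD
  set Ca := Complex.exp (-Complex.I * a * ((n : ℝ) * T) ^ 2 / (2 * b)) with hCa
  set F := Complex.exp (Complex.I *
      (d * ((m : ℝ) * ω0 * b) ^ 2 - 2 * ((m : ℝ) * ω0 * b) * ((n : ℝ) * T) +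
        a * ((n : ℝ) * T) ^ 2) / (2 * b)) with hF
  set e := Complex.exp (-Complex.I * (n : ℝ) * T * (m : ℝ) * ω0) with he
  have hEmne : Em ≠ 0 := Complex.exp_ne_zero _
  have hEpne : Ep ≠ 0 := Complex.exp_ne_zero _
  field_simp
  linear_combination (-A * S * (Ca * F * D) * W) * hee
    + (S * Em * Ep) * (D * Ca * F) * hsq
    + (S * Em * Ep * R) * hexp
end

section
/- Let N, M be natural numbers with 2M + 1 ≤ N and N ≥ 1, let T > 0, τ = N·T, ω₀ = 2π/τ, a, d ∈ ℝ, b > 0. Given coefficients ĝ(m) ∈ ℂ for integers m with |m| ≤ M, define g(n) = √(ω₀·b) · Σ_{|m|≤M} ĝ(m) · (1/√(−i·2πb)) · exp(−i·(a·(nT)² − 2·(nT)·(m·ω₀·b) + d·(m·ω₀·b)²)/(2b)) for n ∈ {0, …, N−1}. Then for every integer m with |m| ≤ M, T·√(ω₀·b) · Σ_{n=0}^{N−1} g(n) · (1/√(i·2πb)) · exp(i·(d·(m·ω₀·b)² − 2·(m·ω₀·b)·(nT) + a·(nT)²)/(2b)) = ĝ(m); i.e., the Discrete LCT recovers the coefficients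 of the inverse Discrete LCT exactly. -/
lemma geom_exp_zero (N : ℕ) (hN : 0 < N) (j : ℤ) (hj : j ≠ 0) (hjN : |j| < (N : ℤ)) :
    ∑ n ∈ Finset.range N, Complex.exp (2 * Real.pi * Complex.I * ((j : ℂ) * n) / N) = 0 := by
  have hNC : (N : ℂ) ≠ 0 := Nat.cast_ne_zero.mpr hN.ne'
  set x := Complex.exp (2 * Real.pi * Complex.I * (j : ℂ) / N) with hx
  have hxn : ∀ n : ℕ, Complex.exp (2 * Real.pi * Complex.I * ((j : ℂ) * n) / N) = x ^ n := by
    intro n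
    rw [hx, ← Complex.exp_nat_mul]
    ring_nf
  have hx1 : x ≠ 1 := by
    intro h
    rw [hx, Complex.exp_eq_one_iff] at h
    obtain ⟨z, hz⟩ := h
    have hpi : (Real.pi : ℂ) ≠ 0 := by exact_mod_cast Real.pi_ne_zero
    have hzj : (j : ℂ) = z * N := by
      have := mul_left_cancel₀ (mul_ne_zero (mul_ne_zero (two_ne_zero) hpi) Complex.I_ne_zero)
        (by field_simp at hz; linear_combination (2 * (Real.pi : ℂ) * Complex.I) * hz :
          (2 * (Real.pi : ℂ) * Complex.I) * (j : ℂ) = (2 * (Real.pi : ℂ) * Complex.I) * ((z : ℂ) * N))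
      exact this
    have hzj' : j = z * N := by exact_mod_cast hzj
    rcases eq_or_ne z 0 with rfl | hz0
    · simp at hzj'; exact hj hzj'
    · have : (N : ℤ) ≤ |j| := by
        rw [hzj', abs_mul]
        calc (N : ℤ) = 1 * |(N : ℤ)| := by
              rw [abs_of_nonneg (by positivity)]; ring
          _ ≤ |z| * |(N : ℤ)| := by
              apply mul_le_mul_of_nonneg_right _ (abs_nonneg _)
              exact Int.one_le_abs hz0
      omega
  have hxN : x ^ N = 1 := by
    rw [hx, ← Complex.exp_nat_mul]
    have : (N : ℂ) * (2 * Real.pi * Complex.I * (j : ℂ) / N) = (j : ℂ) * (2 * Real.pi * Complex.I) := by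
      field_simp
    rw [this, Complex.exp_int_mul_two_pi_mul_I]
  calc ∑ n ∈ Finset.range N, Complex.exp (2 * Real.pi * Complex.I * ((j : ℂ) * n) / N)
      = ∑ n ∈ Finset.range N, x ^ n := Finset.sum_congr rfl fun n _ => hxn n
    _ = (x ^ N - 1) / (x - 1) := geom_sum_eq hx1 N
    _ = 0 := by rw [hxN]; simp



/-- The Discrete LCT recovers the coefficients of the inverse Discrete LCT
exactly whenever 2M + 1 ≤ N. Here √(i·2πb) = √(2πb)·e^{iπ/4} and
√(−i·2πb) = √(2πb)·e^{−iπ/4}. -/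
theorem stmt15 (N M : ℕ) (hN : 1 ≤ N) (hM : 2 * M + 1 ≤ N) (T : ℝ) (hT : 0 < T)
    (a d b : ℝ) (hb : 0 < b)
    (τ ω0 : ℝ) (hτ : τ = (N : ℝ) * T) (hω0 : ω0 = 2 * Real.pi / τ)
    (ghat : ℤ → ℂ) (g : ℕ → ℂ)
    (hg : ∀ n : ℕ, n < N →
      g n = (Real.sqrt (ω0 * b) : ℂ) *
        ∑ m ∈ Finset.Icc (-(M : ℤ)) (M : ℤ), ghat m *
          (1 / ((Real.sqrt (2 * Real.pi * b) : ℂ) * Complex.exp (-Complex.I * Real.pi / 4))) *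
          Complex.exp (-Complex.I *
            (a * ((n : ℝ) * T) ^ 2 - 2 * ((n : ℝ) * T) * ((m : ℝ) * ω0 * b) +
              d * ((m : ℝ) * ω0 * b) ^ 2) / (2 * b))) :
    ∀ m : ℤ, |m| ≤ (M : ℤ) →
      (T : ℂ) * (Real.sqrt (ω0 * b) : ℂ) *
        ∑ n ∈ Finset.range N, g n *
          (1 / ((Real.sqrt (2 * Real.pi * b) : ℂ) * Complex.exp (Complex.I * Real.pi / 4))) *
          Complex.exp (Complex.I *
            (d * ((m : ℝ) * ω0 * b) ^ 2 - 2 * ((m : ℝ) * ω0 * b) * ((n : ℝ) * T) +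
              a * ((n : ℝ) * T) ^ 2) / (2 * b)) = ghat m := by
  intro m hm
  have hN0 : 0 < N := hN
  have hNC : (N : ℂ) ≠ 0 := Nat.cast_ne_zero.mpr hN0.ne'
  have hNR : (0:ℝ) < N := by exact_mod_cast hN0
  have hbC : (b : ℂ) ≠ 0 := by exact_mod_cast hb.ne'
  have hπpos := Real.pi_pos
  have hπ : (Real.pi : ℂ) ≠ 0 := by exact_mod_cast Real.pi_ne_zero
  have hω0pos : 0 < ω0 := by rw [hω0, hτ]; positivity
  have hkey : ω0 * ((N:ℝ) * T) = 2 * Real.pi := by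
    rw [hω0, hτ]; field_simp
  have hkeyC : (ω0 : ℂ) * ((N:ℂ) * (T:ℂ)) = 2 * (Real.pi : ℂ) := by exact_mod_cast hkey
  set S := Finset.Icc (-(M : ℤ)) (M : ℤ) with hS
  have hmS : m ∈ S := by
    rw [hS, Finset.mem_Icc]
    exact ⟨neg_le_of_abs_le hm, le_of_abs_le hm⟩
  set A : ℂ := ((Real.sqrt (2 * Real.pi * b)) : ℂ) with hA
  set B : ℂ := ((Real.sqrt (ω0 * b)) : ℂ) with hB
  set c1 : ℂ := 1 / (A * Complex.exp (-Complex.I * Real.pi / 4)) with hc1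
  set c2 : ℂ := 1 / (A * Complex.exp (Complex.I * Real.pi / 4)) with hc2
  -- combined exponent identity
  have harg : ∀ (k : ℤ) (n : ℕ),
      (-Complex.I *
            (a * ((n : ℝ) * T) ^ 2 - 2 * ((n : ℝ) * T) * ((k : ℝ) * ω0 * b) +
              d * ((k : ℝ) * ω0 * b) ^ 2) / (2 * b)) +
      (Complex.I *
            (d * ((m : ℝ) * ω0 * b) ^ 2 - 2 * ((m : ℝ) * ω0 * b) * ((n : ℝ) * T) +
              a * ((n : ℝ) * T) ^ 2) / (2 * b)) =
      Complex.I * d * (((m:ℂ) * ω0 * b) ^ 2 - ((k:ℂ) * ω0 * b) ^ 2) / (2 * b) +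
        2 * Real.pi * Complex.I * (((k - m : ℤ) : ℂ) * n) / N := by
    intro k n
    push_cast
    field_simp
    ring_nf
    linear_combination (2 * (n:ℂ) * (b:ℂ) * ((k:ℂ) - (m:ℂ))) * hkeyC
  have hinner : ∀ k ∈ S,
      ∑ n ∈ Finset.range N,
        (Complex.exp (-Complex.I *
            (a * ((n : ℝ) * T) ^ 2 - 2 * ((n : ℝ) * T) * ((k : ℝ) * ω0 * b) +
              d * ((k : ℝ) * ω0 * b) ^ 2) / (2 * b)) *
         Complex.exp (Complex.I *
            (d * ((m : ℝ) * ω0 * b) ^ 2 - 2 * ((m : ℝ) * ω0 * b) * ((n : ℝ) * T) +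
              a * ((n : ℝ) * T) ^ 2) / (2 * b))) = if k = m then (N : ℂ) else 0 := by
    intro k hk
    have step : ∀ n ∈ Finset.range N,
        Complex.exp (-Complex.I *
            (a * ((n : ℝ) * T) ^ 2 - 2 * ((n : ℝ) * T) * ((k : ℝ) * ω0 * b) +
              d * ((k : ℝ) * ω0 * b) ^ 2) / (2 * b)) *
         Complex.exp (Complex.I *
            (d * ((m : ℝ) * ω0 * b) ^ 2 - 2 * ((m : ℝ) * ω0 * b) * ((n : ℝ) * T) +
              a * ((n : ℝ) * T) ^ 2) / (2 * b)) =
        Complex.exp (Complex.I * d * (((m:ℂ) * ω0 * b) ^ 2 - ((k:ℂ) * ω0 * b) ^ 2) / (2 * b)) *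
          Complex.exp (2 * Real.pi * Complex.I * (((k - m : ℤ) : ℂ) * n) / N) := by
      intro n _
      rw [← Complex.exp_add, ← Complex.exp_add, harg k n]
    rw [Finset.sum_congr rfl step, ← Finset.mul_sum]
    rcases eq_or_ne k m with rfl | hkm
    · rw [if_pos rfl]
      have h1 : Complex.I * d * (((k:ℂ) * ω0 * b) ^ 2 - ((k:ℂ) * ω0 * b) ^ 2) / (2 * b) = 0 := by
        ring_nf
      have h2 : ∀ n : ℕ, 2 * (Real.pi:ℂ) * Complex.I * (((k - k : ℤ) : ℂ) * n) / N = 0 := by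
        intro n; simp
      simp only [h1, Complex.exp_zero, one_mul]
      rw [Finset.sum_congr rfl fun n _ => by rw [h2 n, Complex.exp_zero]]
      simp
    · have hk' := Finset.mem_Icc.mp (hS ▸ hk)
      have hm1 := neg_le_of_abs_le hm
      have hm2 := le_of_abs_le hm
      have hjN : |k - m| < (N : ℤ) := by
        have hMN : (2 * (M:ℤ) + 1) ≤ (N : ℤ) := by exact_mod_cast hM
        rw [abs_lt]; omega
      rw [geom_exp_zero N hN0 (k - m) (sub_ne_zero.mpr hkm) hjN, mul_zero, if_neg hkm]
  -- rewrite the double sum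
  have hrw : ∑ n ∈ Finset.range N, g n * c2 *
          Complex.exp (Complex.I *
            (d * ((m : ℝ) * ω0 * b) ^ 2 - 2 * ((m : ℝ) * ω0 * b) * ((n : ℝ) * T) +
              a * ((n : ℝ) * T) ^ 2) / (2 * b)) =
      ∑ k ∈ S, (B * ghat k * c1 * c2) *
        ∑ n ∈ Finset.range N,
          (Complex.exp (-Complex.I *
            (a * ((n : ℝ) * T) ^ 2 - 2 * ((n : ℝ) * T) * ((k : ℝ) * ω0 * b) +
              d * ((k : ℝ) * ω0 * b) ^ 2) / (2 * b)) *
           Complex.exp (Complex.I *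
            (d * ((m : ℝ) * ω0 * b) ^ 2 - 2 * ((m : ℝ) * ω0 * b) * ((n : ℝ) * T) +
              a * ((n : ℝ) * T) ^ 2) / (2 * b))) := by
    calc ∑ n ∈ Finset.range N, g n * c2 *
          Complex.exp (Complex.I *
            (d * ((m : ℝ) * ω0 * b) ^ 2 - 2 * ((m : ℝ) * ω0 * b) * ((n : ℝ) * T) +
              a * ((n : ℝ) * T) ^ 2) / (2 * b))
        = ∑ n ∈ Finset.range N, ∑ k ∈ S, (B * ghat k * c1 * c2) *
            (Complex.exp (-Complex.I *
              (a * ((n : ℝ) * T) ^ 2 - 2 * ((n : ℝ) * T) * ((k : ℝ) * ω0 * b) +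
                d * ((k : ℝ) * ω0 * b) ^ 2) / (2 * b)) *
             Complex.exp (Complex.I *
              (d * ((m : ℝ) * ω0 * b) ^ 2 - 2 * ((m : ℝ) * ω0 * b) * ((n : ℝ) * T) +
                a * ((n : ℝ) * T) ^ 2) / (2 * b))) := by
          refine Finset.sum_congr rfl fun n hn => ?_
          rw [hg n (Finset.mem_range.mp hn)]; simp only [Finset.mul_sum, Finset.sum_mul]
          refine Finset.sum_congr rfl fun k _ => ?_
          ring
      _ = ∑ k ∈ S, ∑ n ∈ Finset.range N, (B * ghat k * c1 * c2) *
            (Complex.exp (-Complex.I *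
              (a * ((n : ℝ) * T) ^ 2 - 2 * ((n : ℝ) * T) * ((k : ℝ) * ω0 * b) +
                d * ((k : ℝ) * ω0 * b) ^ 2) / (2 * b)) *
             Complex.exp (Complex.I *
              (d * ((m : ℝ) * ω0 * b) ^ 2 - 2 * ((m : ℝ) * ω0 * b) * ((n : ℝ) * T) +
                a * ((n : ℝ) * T) ^ 2) / (2 * b))) := Finset.sum_comm
      _ = _ := Finset.sum_congr rfl fun k _ => (Finset.mul_sum _ _ _).symm
  have hsum2 : ∑ k ∈ S, (B * ghat k * c1 * c2) *
        ∑ n ∈ Finset.range N,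
          (Complex.exp (-Complex.I *
            (a * ((n : ℝ) * T) ^ 2 - 2 * ((n : ℝ) * T) * ((k : ℝ) * ω0 * b) +
              d * ((k : ℝ) * ω0 * b) ^ 2) / (2 * b)) *
           Complex.exp (Complex.I *
            (d * ((m : ℝ) * ω0 * b) ^ 2 - 2 * ((m : ℝ) * ω0 * b) * ((n : ℝ) * T) +
              a * ((n : ℝ) * T) ^ 2) / (2 * b))) =
      (B * ghat m * c1 * c2) * N := by
    rw [Finset.sum_congr rfl fun k hk => by rw [hinner k hk]]
    rw [Finset.sum_eq_single_of_mem m hmS]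
    · rw [if_pos rfl]
    · intro k _ hkm
      rw [if_neg hkm, mul_zero]
  -- constants
  have hsqrt2πb : A * A = ((2 * Real.pi * b : ℝ) : ℂ) := by
    rw [hA, ← Complex.ofReal_mul, Real.mul_self_sqrt (by positivity)]
  have hsqrtω : B * B = ((ω0 * b : ℝ) : ℂ) := by
    rw [hB, ← Complex.ofReal_mul, Real.mul_self_sqrt (by positivity)]
  have hexp1 : Complex.exp (-Complex.I * Real.pi / 4) * Complex.exp (Complex.I * Real.pi / 4) = 1 := by
    rw [← Complex.exp_add]
    have : (-Complex.I * (Real.pi:ℂ) / 4) + (Complex.I * (Real.pi:ℂ) / 4) = 0 := by ring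
    rw [this, Complex.exp_zero]
  have hc12 : c1 * c2 = 1 / ((2 * Real.pi * b : ℝ) : ℂ) := by
    rw [hc1, hc2, div_mul_div_comm, one_mul]
    congr 1
    calc A * Complex.exp (-Complex.I * Real.pi / 4) * (A * Complex.exp (Complex.I * Real.pi / 4))
        = (A * A) * (Complex.exp (-Complex.I * Real.pi / 4) * Complex.exp (Complex.I * Real.pi / 4)) := by
          ring
      _ = ((2 * Real.pi * b : ℝ) : ℂ) := by rw [hsqrt2πb, hexp1, mul_one]
  calc (T : ℂ) * B * ∑ n ∈ Finset.range N, g n * c2 *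
          Complex.exp (Complex.I *
            (d * ((m : ℝ) * ω0 * b) ^ 2 - 2 * ((m : ℝ) * ω0 * b) * ((n : ℝ) * T) +
              a * ((n : ℝ) * T) ^ 2) / (2 * b))
      = (T : ℂ) * B * ((B * ghat m * c1 * c2) * N) := by rw [hrw, hsum2]
    _ = ghat m * (((T:ℂ) * (B * B) * N) * (c1 * c2)) := by ring
    _ = ghat m * (((T:ℂ) * ((ω0 * b : ℝ):ℂ) * N) * (1 / ((2 * Real.pi * b : ℝ) : ℂ))) := by
          rw [hsqrtω, hc12]
    _ = ghat m := by
          have h1 : ((T:ℂ) * ((ω0 * b : ℝ):ℂ) * N) * (1 / ((2 * Real.pi * b : ℝ) : ℂ)) = 1 := by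
            push_cast
            field_simp
            linear_combination hkeyC
          rw [h1, mul_one]
end
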